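/- Let (M,q) be a metric group and let L1, L2, L3 be Lagrangian subgroups of M. Let x1 ∈ L1, x2 ∈ L2 with x := x1 + x2 ∈ L3. Then the following are equivalent: (a) for all y1 ∈ L1 and y2 ∈ L2 with y1 + y2 ∈ L3 one has b_q(x1, y2) = 1; (b) x ∈ (L1 ∩ L3) + (L2 ∩ L3). (That is, the kernel of the bicharacter c(x,y) := b_q(x1,y2) on A := (L1+L2) ∩ L3 equals B := (L1 ∩ L3) + (L2 ∩ L3).) -/

import Mathlib

/-- The symmetric bicharacter associated to a quadratic form `q` with values in `ℂˣ`. -/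
def bq {M : Type*} [AddCommGroup M] (q : M → ℂˣ) (x y : M) : ℂˣ :=
  q (x + y) * (q x)⁻¹ * (q y)⁻¹

/-- `(M, q)` is a metric group: `q` is even, `b_q` is biadditive and nondegenerate. -/
def IsMetric {M : Type*} [AddCommGroup M] (q : M → ℂˣ) : Prop :=
  (∀ x, q (-x) = q x) ∧
  (∀ x y z, bq q (x + y) z = bq q x z * bq q y z) ∧
  (∀ x y z, bq q x (y + z) = bq q x y * bq q x z) ∧
  (∀ x, (∀ y, bq q x y = 1) → x = 0)

/-- A subgroup `L` is Lagrangian for `q` if `q = 1` on `L` and `|L|² = |M|`. -/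
def IsLagrangian {M : Type*} [AddCommGroup M] (q : M → ℂˣ) (L : AddSubgroup M) : Prop :=
  (∀ x ∈ L, q x = 1) ∧ Nat.card L ^ 2 = Nat.card M

section Aux
variable {M : Type*} [AddCommGroup M] {q : M → ℂˣ}

lemma bq_comm (q : M → ℂˣ) (x y : M) : bq q x y = bq q y x := by
  unfold bq; rw [add_comm x y]; exact mul_right_comm _ _ _

lemma bq_zero_left (hq : IsMetric q) (y : M) : bq q 0 y = 1 := by
  have h := hq.2.1 0 0 y
  rw [add_zero] at h
  have h2 : bq q 0 y * bq q 0 y = bq q 0 y * 1 := by rw [mul_one]; exact h.symm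
  exact mul_left_cancel h2

lemma bq_zero_right (hq : IsMetric q) (x : M) : bq q x 0 = 1 := by
  rw [bq_comm]; exact bq_zero_left hq x

lemma bq_neg_left (hq : IsMetric q) (x y : M) : bq q (-x) y = (bq q x y)⁻¹ := by
  have h := hq.2.1 x (-x) y
  rw [add_neg_cancel, bq_zero_left hq] at h
  exact eq_inv_of_mul_eq_one_right h.symm

/-- `perp q hq N` is the orthogonal complement of `N` for `b_q`. -/
def perp (q : M → ℂˣ) (hq : IsMetric q) (N : AddSubgroup M) : AddSubgroup M where
  carrier := {x | ∀ y ∈ N, bq q x y = 1}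
  zero_mem' := fun y _ => bq_zero_left hq y
  add_mem' := by
    intro a b ha hb y hy
    rw [hq.2.1 a b y, ha y hy, hb y hy, one_mul]
  neg_mem' := by
    intro a ha y hy
    rw [bq_neg_left hq, ha y hy, inv_one]

lemma mem_perp {hq : IsMetric q} {N : AddSubgroup M} {x : M} :
    x ∈ perp q hq N ↔ ∀ y ∈ N, bq q x y = 1 := Iff.rfl

end Aux

section Card
variable {M : Type*} [AddCommGroup M] [Fintype M] {q : M → ℂˣ}

/-- Sum of a nontrivial character vanishes. -/
lemma sum_char_eq_zero {G : Type*} [AddCommGroup G] [Fintype G] (f : G → ℂ)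
    (hf : ∀ a b, f (a + b) = f a * f b) (a : G) (ha : f a ≠ 1) :
    ∑ x : G, f x = 0 := by
  have h1 : ∑ x : G, f (a + x) = ∑ x : G, f x :=
    Fintype.sum_equiv (Equiv.addLeft a) _ _ (fun x => rfl)
  have h2 : ∑ x : G, f (a + x) = f a * ∑ x : G, f x := by
    rw [Finset.mul_sum]; exact Finset.sum_congr rfl (fun x _ => hf a x)
  have h3 : (f a - 1) * ∑ x : G, f x = 0 := by
    rw [sub_mul, one_mul, ← h2, h1, sub_self]
  rcases mul_eq_zero.mp h3 with h | h
  · exact absurd (by linear_combination h : f a = 1) ha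
  · exact h

lemma card_perp (hq : IsMetric q) (N : AddSubgroup M) :
    Nat.card (perp q hq N) * Nat.card N = Nat.card M := by
  classical
  have hsum1 : ∀ x : M, (∑ y : N, ((bq q x (y : M) : ℂˣ) : ℂ)) =
      (if x ∈ perp q hq N then (Nat.card N : ℂ) else 0) := by
    intro x
    by_cases hx : x ∈ perp q hq N
    · rw [if_pos hx]
      have : ∀ y : N, ((bq q x (y : M) : ℂˣ) : ℂ) = 1 := by
        intro y
        rw [hx (y : M) y.2]; simp
      rw [Finset.sum_congr rfl (fun y _ => this y)]
      simp [Nat.card_eq_fintype_card]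
    · rw [if_neg hx]
      obtain ⟨a, haN, ha⟩ : ∃ a ∈ N, bq q x a ≠ 1 := by
        by_contra h
        push_neg at h
        exact hx (fun y hy => h y hy)
      refine sum_char_eq_zero (fun y : N => ((bq q x (y : M) : ℂˣ) : ℂ)) ?_ ⟨a, haN⟩ ?_
      · intro u v
        show ((bq q x (((u + v) : N) : M) : ℂˣ) : ℂ) = _
        rw [AddSubgroup.coe_add, hq.2.2.1 x (u : M) (v : M)]
        simp
      · simp only [ne_eq]
        intro h
        exact ha (Units.ext (by simpa using h))
  have hsum2 : ∀ y : N, (∑ x : M, ((bq q x (y : M) : ℂˣ) : ℂ)) =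
      (if y = 0 then (Nat.card M : ℂ) else 0) := by
    intro y
    by_cases hy : y = (0 : N)
    · subst hy
      have : ∀ x : M, ((bq q x ((0 : N) : M) : ℂˣ) : ℂ) = 1 := by
        intro x
        rw [show ((0 : N) : M) = (0 : M) from rfl, bq_zero_right hq]; simp
      rw [if_pos rfl, Finset.sum_congr rfl (fun x _ => this x)]
      simp [Nat.card_eq_fintype_card]
    · rw [if_neg hy]
      obtain ⟨a, ha⟩ : ∃ a : M, bq q a (y : M) ≠ 1 := by
        by_contra h
        push_neg at h
        have : (y : M) = 0 := hq.2.2.2 _ (fun z => by rw [bq_comm]; exact h z)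
        exact hy (by exact_mod_cast Subtype.ext this)
      refine sum_char_eq_zero (fun x : M => ((bq q x (y : M) : ℂˣ) : ℂ)) ?_ a ?_
      · intro u v
        show ((bq q (u + v) (y : M) : ℂˣ) : ℂ) = _
        rw [hq.2.1 u v (y : M)]; simp
      · simp only [ne_eq]
        intro h
        exact ha (Units.ext (by simpa using h))
  have key : ((Nat.card (perp q hq N) : ℂ)) * (Nat.card N : ℂ) = (Nat.card M : ℂ) := by
    have lhs : ∑ x : M, ∑ y : N, ((bq q x (y : M) : ℂˣ) : ℂ) =
        (Nat.card (perp q hq N) : ℂ) * (Nat.card N : ℂ) := by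
      rw [Finset.sum_congr rfl (fun x _ => hsum1 x), Finset.sum_ite, Finset.sum_const_zero,
        add_zero, Finset.sum_const, nsmul_eq_mul,
        Nat.card_eq_fintype_card (α := perp q hq N), Fintype.card_subtype]
    have rhs : ∑ x : M, ∑ y : N, ((bq q x (y : M) : ℂˣ) : ℂ) = (Nat.card M : ℂ) := by
      rw [Finset.sum_comm, Finset.sum_congr rfl (fun y _ => hsum2 y)]
      simp
    rw [← lhs, rhs]
  exact_mod_cast key

lemma bq_one_of_isotropic {L : AddSubgroup M} (hL : ∀ x ∈ L, q x = 1) {x y : M}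
    (hx : x ∈ L) (hy : y ∈ L) : bq q x y = 1 := by
  unfold bq
  rw [hL _ (add_mem hx hy), hL _ hx, hL _ hy]
  simp

lemma le_perp_of_isotropic (hq : IsMetric q) {L : AddSubgroup M}
    (hL : ∀ x ∈ L, q x = 1) : L ≤ perp q hq L :=
  fun _ hx _ hy => bq_one_of_isotropic hL hx hy

lemma perp_lagrangian (hq : IsMetric q) {L : AddSubgroup M} (hL : IsLagrangian q L) :
    perp q hq L = L := by
  have hle : L ≤ perp q hq L := le_perp_of_isotropic hq hL.1
  have hcard : Nat.card (perp q hq L) = Nat.card L := by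
    have h1 := card_perp hq L
    rw [← hL.2, sq] at h1
    exact Nat.eq_of_mul_eq_mul_right Nat.card_pos h1
  exact (AddSubgroup.eq_of_le_of_card_ge hle hcard.le).symm

lemma perp_sup_eq (hq : IsMetric q) (N K : AddSubgroup M) :
    perp q hq (N ⊔ K) = perp q hq N ⊓ perp q hq K := by
  apply le_antisymm
  · intro x hx
    exact ⟨fun y hy => hx y (AddSubgroup.mem_sup_left hy),
      fun y hy => hx y (AddSubgroup.mem_sup_right hy)⟩
  · intro x hx y hy
    obtain ⟨u, hu, v, hv, rfl⟩ := AddSubgroup.mem_sup.mp hy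
    rw [hq.2.2.1 x u v, hx.1 u hu, hx.2 v hv, one_mul]

lemma card_sup_mul_card_inf (H K : AddSubgroup M) :
    Nat.card ↥(H ⊔ K) * Nat.card ↥(H ⊓ K) = Nat.card H * Nat.card K := by
  have e1 : Nat.card (K.addSubgroupOf (H ⊔ K)) * K.relIndex (H ⊔ K) = Nat.card ↥(H ⊔ K) :=
    AddSubgroup.card_mul_index (K.addSubgroupOf (H ⊔ K))
  have e2 : Nat.card (K.addSubgroupOf (H ⊔ K)) = Nat.card K :=
    Nat.card_congr (AddSubgroup.addSubgroupOfEquivOfLe le_sup_right).toEquiv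
  have e3 : K.relIndex (H ⊔ K) = K.relIndex H := AddSubgroup.relIndex_sup_right H K
  have e4 : (K ⊓ H).relIndex H = K.relIndex H := AddSubgroup.inf_relIndex_right K H
  have e5 : Nat.card ((K ⊓ H).addSubgroupOf H) * (K ⊓ H).relIndex H = Nat.card H :=
    AddSubgroup.card_mul_index ((K ⊓ H).addSubgroupOf H)
  have e6 : Nat.card ((K ⊓ H).addSubgroupOf H) = Nat.card ↥(K ⊓ H) :=
    Nat.card_congr (AddSubgroup.addSubgroupOfEquivOfLe inf_le_right).toEquiv
  have e7 : (K ⊓ H : AddSubgroup M) = H ⊓ K := inf_comm K H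
  calc Nat.card ↥(H ⊔ K) * Nat.card ↥(H ⊓ K)
      = (Nat.card K * K.relIndex H) * Nat.card ↥(H ⊓ K) := by rw [← e1, e2, e3]
    _ = Nat.card ↥(K ⊓ H) * (K ⊓ H).relIndex H * Nat.card ↥K := by
        rw [e4, e7]; ring
    _ = Nat.card ↥((K ⊓ H).addSubgroupOf H) * (K ⊓ H).relIndex H * Nat.card ↥K := by rw [e6]
    _ = Nat.card H * Nat.card K := by rw [e5]

lemma perp_inf_eq (hq : IsMetric q) (N K : AddSubgroup M) :
    perp q hq (N ⊓ K) = perp q hq N ⊔ perp q hq K := by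
  set P := perp q hq N
  set Q := perp q hq K
  have hle : P ⊔ Q ≤ perp q hq (N ⊓ K) := by
    apply sup_le
    · exact fun x hx y hy => hx y hy.1
    · exact fun x hx y hy => hx y hy.2
  have hm : 0 < Nat.card M := Nat.card_pos
  -- card (P ⊔ Q) * card (N ⊓ K) = card M
  have hPQ : Nat.card (P ⊔ Q : AddSubgroup M) * Nat.card (N ⊓ K : AddSubgroup M)
      = Nat.card M := by
    have h1 : Nat.card (P ⊔ Q : AddSubgroup M) * Nat.card (perp q hq (N ⊔ K))
        = Nat.card P * Nat.card Q := by
      rw [perp_sup_eq hq N K]; exact card_sup_mul_card_inf P Q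
    have h2 := card_perp hq (N ⊔ K)
    have h3 := card_perp hq N
    have h4 := card_perp hq K
    have h5 := card_sup_mul_card_inf N K
    apply Nat.eq_of_mul_eq_mul_left hm
    calc Nat.card M * (Nat.card (P ⊔ Q : AddSubgroup M) * Nat.card (N ⊓ K : AddSubgroup M))
        = (Nat.card (P ⊔ Q : AddSubgroup M) * Nat.card (perp q hq (N ⊔ K)))
            * (Nat.card (N ⊔ K : AddSubgroup M) * Nat.card (N ⊓ K : AddSubgroup M)) := by
          rw [← h2]; ring
      _ = (Nat.card P * Nat.card Q) * (Nat.card N * Nat.card K) := by rw [h1, h5]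
      _ = (Nat.card P * Nat.card N) * (Nat.card Q * Nat.card K) := by ring
      _ = Nat.card M * Nat.card M := by rw [h3, h4]
  have hcard : Nat.card (perp q hq (N ⊓ K)) ≤ Nat.card (P ⊔ Q : AddSubgroup M) := by
    have h := card_perp hq (N ⊓ K)
    have hpos : 0 < Nat.card (N ⊓ K : AddSubgroup M) := Nat.card_pos
    exact (Nat.eq_of_mul_eq_mul_right hpos (h.trans hPQ.symm)).le
  exact (AddSubgroup.eq_of_le_of_card_ge hle hcard).symm

end Card

/-- The kernel of the bicharacter `c(x,y) = b_q(x1,y2)` on `A = (L1+L2) ∩ L3`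
equals `B = (L1 ∩ L3) + (L2 ∩ L3)`. -/
theorem stmt4 {M : Type*} [AddCommGroup M] [Fintype M] (q : M → ℂˣ)
    (hq : IsMetric q) (L1 L2 L3 : AddSubgroup M)
    (h1 : IsLagrangian q L1) (h2 : IsLagrangian q L2) (h3 : IsLagrangian q L3)
    (x1 x2 : M) (hx1 : x1 ∈ L1) (hx2 : x2 ∈ L2) (hx3 : x1 + x2 ∈ L3) :
    (∀ y1 y2 : M, y1 ∈ L1 → y2 ∈ L2 → y1 + y2 ∈ L3 → bq q x1 y2 = 1) ↔
      x1 + x2 ∈ ((L1 ⊓ L3) ⊔ (L2 ⊓ L3) : AddSubgroup M) := by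
  have key : (∀ y1 y2 : M, y1 ∈ L1 → y2 ∈ L2 → y1 + y2 ∈ L3 → bq q x1 y2 = 1) ↔
      x1 ∈ perp q hq (L2 ⊓ (L1 ⊔ L3)) := by
    constructor
    · intro h y hy
      obtain ⟨hyL2, hy13⟩ := hy
      obtain ⟨u, hu, w, hw, huw⟩ := AddSubgroup.mem_sup.mp hy13
      refine h (-u) y (neg_mem hu) hyL2 ?_
      have : -u + y = w := by rw [← huw]; abel
      rw [this]; exact hw
    · intro h y1 y2 hy1 hy2 hy3
      exact h y2 ⟨hy2, AddSubgroup.mem_sup.mpr ⟨-y1, neg_mem hy1, y1 + y2, hy3, by abel⟩⟩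
  rw [key]
  have hperp : perp q hq (L2 ⊓ (L1 ⊔ L3)) = L2 ⊔ (L1 ⊓ L3) := by
    rw [perp_inf_eq hq, perp_lagrangian hq h2, perp_sup_eq hq, perp_lagrangian hq h1,
      perp_lagrangian hq h3]
  rw [hperp]
  constructor
  · intro hx
    obtain ⟨u, hu, a, ha, hua⟩ := AddSubgroup.mem_sup.mp hx
    refine AddSubgroup.mem_sup.mpr ⟨a, ha, u + x2, AddSubgroup.mem_inf.mpr ⟨add_mem hu hx2, ?_⟩, by rw [← hua]; abel⟩
    have h' : u + x2 = (x1 + x2) - a := by rw [← hua]; abel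
    rw [h']; exact sub_mem hx3 (AddSubgroup.mem_inf.mp ha).2
  · intro hx
    obtain ⟨a, ha, b, hb, hab⟩ := AddSubgroup.mem_sup.mp hx
    refine AddSubgroup.mem_sup.mpr ⟨b - x2, sub_mem (AddSubgroup.mem_inf.mp hb).1 hx2, a, ha, ?_⟩
    calc b - x2 + a = a + b - x2 := by abel
      _ = x1 + x2 - x2 := by rw [hab]
      _ = x1 := by abel
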